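/- arXiv:0903.1989 — 4 statements merged into one kernel-verified Lean document; each statement's English description precedes it below -/
import Mathlib

section
/- Let X be a finite-dimensional simplicial complex with a simplicial action of a group G, and let Y ≤ X be a connected, simply connected subcomplex that is a strict fundamental domain (Y meets every G-orbit of simplices in exactly one simplex). Let G_0 = ⟨G_s : s ∈ Y⟩ be the subgroup generated by the stabilizers of simplices of Y. Then π_0(|X|) ≅ G/G_0 (as G-sets, where G/G_0 is the coset space). -/
/-!
STATEMENT 4: Let `X` be a finite-dimensional simplicial complex with a simplicial
action of a group `G`, and `Y ≤ X` a connected, simply connected subcomplex which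
is a strict fundamental domain.  With `G₀ = ⟨G_s : s ∈ Y⟩` the subgroup generated
by the stabilizers of simplices of `Y`, there is a `G`-equivariant bijection
`π₀(|X|) ≅ G/G₀`.

Simplicial complexes are modelled as down-closed sets of nonempty finite sets of
vertices, and the geometric realization `|X|` concretely as the space of convex
weight functions supported on a simplex.
-/

open scoped Pointwise

/-- The geometric realization of the simplicial complex `X`. -/
abbrev Realization {V : Type*} (X : Set (Finset V)) : Type _ :=
  {f : V → ℝ // (∀ v, 0 ≤ f v) ∧ ∃ s ∈ X, Function.support f ⊆ ↑s ∧ ∑ v ∈ s, f v = 1}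

/-- `Y` is a subcomplex of `X`. -/
def IsSubcomplexOf {V : Type*} (Y X : Set (Finset V)) : Prop :=
  Y ⊆ X ∧ ∀ s ∈ Y, ∀ t : Finset V, t.Nonempty → t ⊆ s → t ∈ Y

/-- The subgroup generated by the (setwise) stabilizers of the simplices of `Y`. -/
def stabSubgroup {V G : Type*} [Group G] [DecidableEq V] [MulAction G V]
    (Y : Set (Finset V)) : Subgroup G :=
  Subgroup.closure {g : G | ∃ s ∈ Y, g • s = s}

section AuxLemmas

private lemma mk_eq_of_preconnected {α : Type*} [TopologicalSpace α] {s : Set α}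
    (hs : IsPreconnected s) {a b : α} (ha : a ∈ s) (hb : b ∈ s) :
    ConnectedComponents.mk a = ConnectedComponents.mk b :=
  ConnectedComponents.coe_eq_coe'.2 (hs.subset_connectedComponent hb ha)

private lemma mk_eq_map {α β : Type*} [TopologicalSpace α] [TopologicalSpace β]
    {F : α → β} (hF : Continuous F) {a b : α}
    (h : ConnectedComponents.mk a = ConnectedComponents.mk b) :
    ConnectedComponents.mk (F a) = ConnectedComponents.mk (F b) := by
  rw [ConnectedComponents.coe_eq_coe'] at h ⊢
  exact hF.image_connectedComponent_subset b ⟨a, h, rfl⟩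

variable {V : Type*} [DecidableEq V]

private lemma mk_eq_of_shared_simplex {X : Set (Finset V)} {s : Finset V}
    (hs : s ∈ X) (f b : Realization X)
    (hf1 : Function.support f.1 ⊆ ↑s) (hf2 : ∑ v ∈ s, f.1 v = 1)
    (hb1 : Function.support b.1 ⊆ ↑s) (hb2 : ∑ v ∈ s, b.1 v = 1) :
    ConnectedComponents.mk f = ConnectedComponents.mk b := by
  have mem : ∀ t : ℝ, t ∈ Set.Icc (0:ℝ) 1 →
      (∀ v, 0 ≤ (1 - t) * f.1 v + t * b.1 v) ∧
        ∃ u ∈ X, Function.support (fun v => (1 - t) * f.1 v + t * b.1 v) ⊆ ↑u ∧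
          ∑ v ∈ u, ((1 - t) * f.1 v + t * b.1 v) = 1 := by
    intro t ht
    refine ⟨fun v => add_nonneg (mul_nonneg (by linarith [ht.2]) (f.2.1 v))
      (mul_nonneg ht.1 (b.2.1 v)), s, hs, ?_, ?_⟩
    · intro v hv
      by_contra hvs
      have hf0 : f.1 v = 0 := by
        by_contra h0; exact hvs (hf1 (Function.mem_support.2 h0))
      have hb0 : b.1 v = 0 := by
        by_contra h0; exact hvs (hb1 (Function.mem_support.2 h0))
      simp [Function.mem_support, hf0, hb0] at hv
    · rw [Finset.sum_add_distrib, ← Finset.mul_sum, ← Finset.mul_sum, hf2, hb2]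
      ring
  have joined : Joined f b := by
    refine ⟨⟨⟨fun t => ⟨fun v => (1 - t.1) * f.1 v + t.1 * b.1 v, mem t.1 t.2⟩, ?_⟩, ?_, ?_⟩⟩
    · refine Continuous.subtype_mk ?_ _
      exact continuous_pi fun v => by fun_prop
    · exact Subtype.ext (funext fun v => by simp)
    · exact Subtype.ext (funext fun v => by simp)
  exact ConnectedComponents.coe_eq_coe'.2 (pathComponent_subset_component _ joined.symm)

private noncomputable def baryFun (s : Finset V) : V → ℝ :=
  fun v => if v ∈ s then (s.card : ℝ)⁻¹ else 0

private lemma baryFun_nonneg (s : Finset V) (v : V) : 0 ≤ baryFun s v := by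
  unfold baryFun; split <;> positivity

private lemma baryFun_support (s : Finset V) : Function.support (baryFun s) ⊆ ↑s := by
  intro v hv
  by_contra h
  have h' : v ∉ s := fun hh => h hh
  simp [baryFun, h'] at hv

private lemma baryFun_sum (s : Finset V) (hne : s.Nonempty) : ∑ v ∈ s, baryFun s v = 1 := by
  unfold baryFun
  rw [Finset.sum_congr rfl (fun v hv => if_pos hv), Finset.sum_const, nsmul_eq_mul]
  exact mul_inv_cancel₀ (Nat.cast_ne_zero.2 (Finset.card_ne_zero.mpr hne))

private noncomputable def bary {X : Set (Finset V)} {s : Finset V} (hs : s ∈ X)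
    (hne : s.Nonempty) : Realization X :=
  ⟨baryFun s, baryFun_nonneg s, s, hs, baryFun_support s, baryFun_sum s hne⟩

private lemma baryFun_smul {G : Type*} [Group G] [MulAction G V] (g : G) (s : Finset V)
    (v : V) : baryFun s (g⁻¹ • v) = baryFun (g • s) v := by
  simp [baryFun, Finset.inv_smul_mem_iff, Finset.card_smul_finset]

end AuxLemmas

theorem pi0_of_strict_fundamental_domain {V G : Type*} [Group G] [DecidableEq V]
    [MulAction G V] (X Y : Set (Finset V))
    -- `X` is a simplicial complex:
    (hX : ∀ s ∈ X, s.Nonempty ∧ ∀ t : Finset V, t.Nonempty → t ⊆ s → t ∈ X)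
    -- which is finite-dimensional:
    (hfindim : ∃ n, ∀ s ∈ X, s.card ≤ n)
    -- `G` acts simplicially on `X`:
    (hGX : ∀ g : G, ∀ s ∈ X, g • s ∈ X)
    -- `Y` is a subcomplex of `X`:
    (hY : IsSubcomplexOf Y X)
    -- which is a strict fundamental domain (each `G`-orbit meets `Y` exactly once):
    (hfund : ∀ s ∈ X, ∃! t : Finset V, t ∈ Y ∧ ∃ g : G, g • s = t)
    -- `|Y|` is connected and simply connected:
    (hYconn : ConnectedSpace (Realization Y))
    (hYsc : SimplyConnectedSpace (Realization Y))
    -- the induced action of `G` on the realization `|X|`: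
    (φ : G →* Equiv.Perm (Realization X))
    (hφcont : ∀ g : G, Continuous (φ g))
    (hφ : ∀ (g : G) (f : Realization X) (v : V), (φ g f).1 v = f.1 (g⁻¹ • v)) :
    -- conclusion: `π₀(|X|) ≅ G/G₀` as `G`-sets
    ∃ e : G ⧸ stabSubgroup (G := G) Y ≃ ConnectedComponents (Realization X),
      ∀ (g : G) (y : G ⧸ stabSubgroup (G := G) Y) (f : Realization X),
        e y = ConnectedComponents.mk f → e (g • y) = ConnectedComponents.mk (φ g f) := by
  classical
  obtain ⟨y₀⟩ : Nonempty (Realization Y) := hYconn.toNonempty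
  set G₀ : Subgroup G := stabSubgroup (G := G) Y with hG₀
  have ιmem : ∀ f : Realization Y, (∀ v, 0 ≤ f.1 v) ∧
      ∃ s ∈ X, Function.support f.1 ⊆ ↑s ∧ ∑ v ∈ s, f.1 v = 1 := fun f =>
    ⟨f.2.1, let ⟨s, hs, h1, h2⟩ := f.2.2; ⟨s, hY.1 hs, h1, h2⟩⟩
  let ι : Realization Y → Realization X := fun f => ⟨f.1, ιmem f⟩
  have hιcont : Continuous ι := Continuous.subtype_mk continuous_subtype_val _
  have hrange : IsPreconnected (Set.range ι) := isPreconnected_range hιcont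
  set y₀X : Realization X := ι y₀ with hy₀X
  have hstab : ∀ {h : G} {t : Finset V}, t ∈ Y → h • t = t → h ∈ G₀ :=
    fun ht hh => Subgroup.subset_closure ⟨_, ht, hh⟩
  have φcomp : ∀ (a b : G) (f : Realization X), φ (a * b) f = φ a (φ b f) := by
    intro a b f; rw [map_mul]; rfl
  have φinvφ : ∀ (a : G) (f : Realization X), φ a⁻¹ (φ a f) = f := by
    intro a f; rw [← φcomp, inv_mul_cancel, map_one]; rfl
  have hbar_range : ∀ {t : Finset V} (ht : t ∈ Y) (hne : t.Nonempty),
      (bary (hY.1 ht) hne : Realization X) ∈ Set.range ι :=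
    fun ht hne => ⟨bary ht hne, rfl⟩
  -- generators of `G₀` fix the component of `y₀X`
  have key1 : ∀ h : G, (∃ s ∈ Y, h • s = s) →
      ConnectedComponents.mk (φ h y₀X) = ConnectedComponents.mk y₀X := by
    rintro h ⟨s, hsY, hss⟩
    have hsX : s ∈ X := hY.1 hsY
    have hne : s.Nonempty := (hX s hsX).1
    have h1 : ConnectedComponents.mk y₀X =
        ConnectedComponents.mk (bary (X := X) hsX hne) :=
      mk_eq_of_preconnected hrange ⟨y₀, rfl⟩ (hbar_range hsY hne)
    have h2 : φ h (bary (X := X) hsX hne) = bary (X := X) hsX hne := by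
      refine Subtype.ext (funext fun v => ?_)
      rw [hφ]
      show baryFun s (h⁻¹ • v) = baryFun s v
      rw [baryFun_smul, hss]
    calc ConnectedComponents.mk (φ h y₀X)
        = ConnectedComponents.mk (φ h (bary (X := X) hsX hne)) := mk_eq_map (hφcont h) h1
      _ = ConnectedComponents.mk (bary (X := X) hsX hne) := by rw [h2]
      _ = ConnectedComponents.mk y₀X := h1.symm
  -- all of `G₀` fixes the component of `y₀X`
  have keymem : ∀ h ∈ G₀, ConnectedComponents.mk (φ h y₀X) = ConnectedComponents.mk y₀X := by
    intro h hh
    have hh' : h ∈ Subgroup.closure {g : G | ∃ s ∈ Y, g • s = s} := hh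
    refine Subgroup.closure_induction
      (p := fun g _ => ConnectedComponents.mk (φ g y₀X) = ConnectedComponents.mk y₀X)
      (fun x hx => key1 x hx) ?_ ?_ ?_ hh'
    · show ConnectedComponents.mk (φ 1 y₀X) = ConnectedComponents.mk y₀X
      rw [map_one]; rfl
    · intro x y hx hy px py
      show ConnectedComponents.mk (φ (x * y) y₀X) = ConnectedComponents.mk y₀X
      rw [φcomp]
      exact (mk_eq_map (hφcont x) py).trans px
    · intro x hx px
      show ConnectedComponents.mk (φ x⁻¹ y₀X) = ConnectedComponents.mk y₀X
      have h2 := mk_eq_map (hφcont x⁻¹) px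
      rw [φinvφ] at h2
      exact h2.symm
  let ψ : G → ConnectedComponents (Realization X) := fun g => ConnectedComponents.mk (φ g y₀X)
  have hψ : ∀ (a b : G), b ∈ G₀ → ψ (a * b) = ψ a := by
    intro a b hb
    show ConnectedComponents.mk (φ (a * b) y₀X) = _
    rw [φcomp]
    exact mk_eq_map (hφcont a) (keymem b hb)
  let e0 : G ⧸ G₀ → ConnectedComponents (Realization X) :=
    Quotient.lift ψ (by
      intro a b hab
      have hmem : a⁻¹ * b ∈ G₀ := QuotientGroup.leftRel_apply.mp hab
      have h := hψ a (a⁻¹ * b) hmem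
      rw [mul_inv_cancel_left] at h
      exact h.symm)
  -- the `G₀`-orbit of `Y` as a set of simplices
  let Z : Set (Finset V) := {u | ∃ g ∈ G₀, ∃ t ∈ Y, g • t = u}
  have hZY : ∀ t ∈ Y, t ∈ Z := fun t ht => ⟨1, one_mem _, t, ht, one_smul _ _⟩
  -- coherence of vertex membership in `Z` along simplices
  have hL3 : ∀ (f : Realization X) (v v' : V), f.1 v ≠ 0 → f.1 v' ≠ 0 →
      ({v} : Finset V) ∈ Z → ({v'} : Finset V) ∈ Z := by
    intro f v v' hv hv' hvZ
    obtain ⟨s, hsX, hsupp, hsum⟩ := f.2.2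
    set w : Finset V := s.filter (fun x => f.1 x ≠ 0) with hw
    have hvw : v ∈ w := Finset.mem_filter.2 ⟨hsupp (Function.mem_support.2 hv), hv⟩
    have hv'w : v' ∈ w := Finset.mem_filter.2 ⟨hsupp (Function.mem_support.2 hv'), hv'⟩
    have hwX : w ∈ X := (hX s hsX).2 w ⟨v, hvw⟩ (Finset.filter_subset _ _)
    obtain ⟨k, hk, t, htY, hkt⟩ := hvZ
    have ht : t = {k⁻¹ • v} := by
      have h1 : k⁻¹ • ({v} : Finset V) = t := by rw [← hkt, inv_smul_smul]
      rw [← h1, Finset.smul_finset_singleton]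
    obtain ⟨t', ⟨ht'Y, g, hg⟩, _⟩ := hfund (k⁻¹ • w) (hGX k⁻¹ w hwX)
    have hsin : ∀ x ∈ w, ({g • k⁻¹ • x} : Finset V) ∈ Y := by
      intro x hx
      have hxt : g • k⁻¹ • x ∈ t' := by
        rw [← hg]
        exact Finset.smul_mem_smul_finset (Finset.smul_mem_smul_finset hx)
      exact hY.2 t' ht'Y _ (Finset.singleton_nonempty _) (Finset.singleton_subset_iff.2 hxt)
    have hkvY : ({k⁻¹ • v} : Finset V) ∈ Y := ht ▸ htY
    obtain ⟨t₂, _, huniq₂⟩ := hfund {k⁻¹ • v} (hY.1 hkvY)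
    have e1 : ({k⁻¹ • v} : Finset V) = t₂ := huniq₂ _ ⟨hkvY, 1, one_smul _ _⟩
    have e2 : ({g • k⁻¹ • v} : Finset V) = t₂ :=
      huniq₂ _ ⟨hsin v hvw, g, by rw [Finset.smul_finset_singleton]⟩
    have hgstab : g • ({k⁻¹ • v} : Finset V) = {k⁻¹ • v} := by
      rw [Finset.smul_finset_singleton, e2, ← e1]
    have hgG₀ : g ∈ G₀ := hstab hkvY hgstab
    refine ⟨k * g⁻¹, mul_mem hk (inv_mem hgG₀), {g • k⁻¹ • v'}, hsin v' hv'w, ?_⟩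
    rw [Finset.smul_finset_singleton]
    congr 1
    simp [mul_smul]
  -- every point of `|X|` has some nonzero coordinate
  have hsuppne : ∀ f : Realization X, ∃ v, f.1 v ≠ 0 := by
    intro f
    obtain ⟨s, _, _, hsum⟩ := f.2.2
    obtain ⟨v, _, hv⟩ := Finset.exists_ne_zero_of_sum_ne_zero (hsum ▸ one_ne_zero)
    exact ⟨v, hv⟩
  have hopen : ∀ P : Set V, IsOpen {f : Realization X | ∃ v ∈ P, f.1 v ≠ 0} := by
    intro P
    have hP : {f : Realization X | ∃ v ∈ P, f.1 v ≠ 0} =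
        ⋃ v ∈ P, {f : Realization X | f.1 v ≠ 0} := by
      ext f; simp
    rw [hP]
    refine isOpen_biUnion fun v _ => ?_
    have : {f : Realization X | f.1 v ≠ 0} =
        (fun f : Realization X => f.1 v) ⁻¹' {(0:ℝ)}ᶜ := rfl
    rw [this]
    exact IsOpen.preimage ((continuous_apply v).comp continuous_subtype_val)
      isOpen_compl_singleton
  set A : Set (Realization X) := {f | ∃ v ∈ {v : V | ({v} : Finset V) ∈ Z}, f.1 v ≠ 0}
    with hA
  have hAopen : IsOpen A := hopen _
  have hAcopen : IsOpen Aᶜ := by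
    have hAc : Aᶜ = {f : Realization X | ∃ v ∈ {v : V | ({v} : Finset V) ∉ Z}, f.1 v ≠ 0} := by
      ext f
      simp only [Set.mem_compl_iff, hA, Set.mem_setOf_eq]
      constructor
      · intro hfA
        obtain ⟨v, hv⟩ := hsuppne f
        exact ⟨v, fun hZv => hfA ⟨v, hZv, hv⟩, hv⟩
      · rintro ⟨v, hvnZ, hv⟩ ⟨v', hv'Z, hv'⟩
        exact hvnZ (hL3 f v' v hv' hv hv'Z)
    rw [hAc]
    exact hopen _
  obtain ⟨s₀, hs₀Y, hsupp₀, hsum₀⟩ := y₀.2.2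
  have hy₀A : y₀X ∈ A := by
    obtain ⟨v₀, hv₀s, hv₀⟩ := Finset.exists_ne_zero_of_sum_ne_zero (hsum₀ ▸ one_ne_zero)
    exact ⟨v₀, hZY _ (hY.2 s₀ hs₀Y {v₀} (Finset.singleton_nonempty _)
      (Finset.singleton_subset_iff.2 hv₀s)), hv₀⟩
  -- injectivity kernel
  have keyinj : ∀ h : G, ConnectedComponents.mk (φ h y₀X) = ConnectedComponents.mk y₀X →
      h ∈ G₀ := by
    intro h hmk
    have hclopen : IsClopen A := ⟨isOpen_compl_iff.1 hAcopen, hAopen⟩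
    have hmem : φ h y₀X ∈ A :=
      hclopen.connectedComponent_subset hy₀A (ConnectedComponents.coe_eq_coe'.1 hmk)
    obtain ⟨v, hvZ, hv⟩ := hmem
    have hvy : y₀X.1 (h⁻¹ • v) ≠ 0 := by rwa [hφ] at hv
    have huY : ({h⁻¹ • v} : Finset V) ∈ Y :=
      hY.2 s₀ hs₀Y _ (Finset.singleton_nonempty _)
        (Finset.singleton_subset_iff.2 (hsupp₀ (Function.mem_support.2 hvy)))
    obtain ⟨k, hk, t, htY, hkt⟩ := hvZ
    have ht : t = {k⁻¹ • v} := by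
      have h1 : k⁻¹ • ({v} : Finset V) = t := by rw [← hkt, inv_smul_smul]
      rw [← h1, Finset.smul_finset_singleton]
    obtain ⟨t₂, _, huniq⟩ := hfund {h⁻¹ • v} (hY.1 huY)
    have e1 : ({h⁻¹ • v} : Finset V) = t₂ := huniq _ ⟨huY, 1, one_smul _ _⟩
    have e2 : t = t₂ := huniq _ ⟨htY, k⁻¹ * h, by
      rw [ht, mul_smul, Finset.smul_finset_singleton, Finset.smul_finset_singleton,
        smul_inv_smul]⟩
    have hstabm : (k⁻¹ * h) • ({h⁻¹ • v} : Finset V) = {h⁻¹ • v} := by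
      calc (k⁻¹ * h) • ({h⁻¹ • v} : Finset V) = t := by
            rw [ht, mul_smul, Finset.smul_finset_singleton, Finset.smul_finset_singleton,
              smul_inv_smul]
        _ = {h⁻¹ • v} := e2.trans e1.symm
    have hmem₀ : k⁻¹ * h ∈ G₀ := hstab huY hstabm
    have hfin := mul_mem hk hmem₀
    rwa [mul_inv_cancel_left] at hfin
  have hinj : Function.Injective e0 := by
    intro qa qb
    refine Quotient.inductionOn₂ qa qb fun a b hab => ?_
    have h1 : ConnectedComponents.mk (φ a y₀X) = ConnectedComponents.mk (φ b y₀X) := hab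
    have h2 := mk_eq_map (hφcont a⁻¹) h1
    rw [φinvφ] at h2
    have h3 : ConnectedComponents.mk (φ (a⁻¹ * b) y₀X) = ConnectedComponents.mk y₀X := by
      rw [φcomp]; exact h2.symm
    exact Quotient.sound (QuotientGroup.leftRel_apply.mpr (keyinj _ h3))
  have hsurj : Function.Surjective e0 := by
    intro c
    obtain ⟨f, rfl⟩ := ConnectedComponents.surjective_coe c
    obtain ⟨s, hsX, hsupp, hsum⟩ := f.2.2
    have hne : s.Nonempty := (hX s hsX).1
    have h1 : ConnectedComponents.mk f = ConnectedComponents.mk (bary (X := X) hsX hne) :=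
      mk_eq_of_shared_simplex hsX f _ hsupp hsum (baryFun_support s) (baryFun_sum s hne)
    obtain ⟨t, ⟨htY, g, hgs⟩, _⟩ := hfund s hsX
    have htne : t.Nonempty := (hX t (hY.1 htY)).1
    have hb : φ g (bary (X := X) hsX hne) = bary (X := X) (hY.1 htY) htne := by
      refine Subtype.ext (funext fun v => ?_)
      rw [hφ]
      show baryFun s (g⁻¹ • v) = baryFun t v
      rw [baryFun_smul, hgs]
    have h2 : ConnectedComponents.mk (bary (X := X) (hY.1 htY) htne) =
        ConnectedComponents.mk y₀X :=
      mk_eq_of_preconnected hrange (hbar_range htY htne) ⟨y₀, rfl⟩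
    refine ⟨QuotientGroup.mk g⁻¹, ?_⟩
    show ConnectedComponents.mk (φ g⁻¹ y₀X) = ConnectedComponents.mk f
    have h3 := mk_eq_map (hφcont g⁻¹) h2.symm
    rw [← hb, φinvφ] at h3
    exact h3.trans h1.symm
  refine ⟨Equiv.ofBijective e0 ⟨hinj, hsurj⟩, ?_⟩
  intro g y f hef
  obtain ⟨a, rfl⟩ := Quotient.exists_rep y
  have hef' : ConnectedComponents.mk (φ a y₀X) = ConnectedComponents.mk f := hef
  show ConnectedComponents.mk (φ (g * a) y₀X) = _
  rw [φcomp]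
  exact mk_eq_map (hφcont g) hef'
end

section
/- Let (A_i)_{i ∈ I} be a directed family of subgroups of a group H indexed by a poset I with inclusions as transition maps, and let L = colim_I A_i be the colimit with canonical maps φ_i : A_i → L and canonical homomorphism φ : L → H restricting to the inclusions. Suppose that for any i, j ∈ I and any elements a ∈ A_i, b ∈ A_j such that φ(φ_i(a)) and φ(φ_j(b)) lie in a common subgroup of the family (i.e. there is k with a, b ∈ A_k after transporting along φ), the product φ_i(a)φ_j(b) equals φ_k(ab) in L. If every element of L can be written as a finite product of images φ_i(a_i), and whenever a word φ_{i_1}(a_1)···φ_{i_n}(a_n) maps to 1 in H with n > 1 there exist consecutive letters lying in a common group A_k of the family, then φ : L → H is injective onto the subgroup ⟨A_i : i ∈ I⟩. -/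
/-!
STATEMENT 9: Abstract injectivity criterion for the colimit of a directed family
of subgroups (Serre, Trees §1): if `(A_i)_{i ∈ I}` is a family of subgroups of
`H` indexed by a poset, `L` its colimit with canonical maps `φ_i : A_i → L` and
`φ : L → H` restricting to the inclusions, products of letters lying in a common
subgroup of the family can be formed inside `L`, every element of `L` is a
product of images `φ_i(a)`, and every word of length `> 1` mapping to `1` in `H`
has two consecutive letters in a common group of the family, then `φ` is
injective with image `⟨A_i : i ∈ I⟩ = ⨆ i, A_i`.
-/

theorem colimit_injective_of_word_shortening {H : Type*} [Group H] {I : Type*}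
    [Preorder I] (A : I → Subgroup H)
    (hdir : ∀ i j : I, i ≤ j → A i ≤ A j)
    (L : Type*) [Group L] (φi : ∀ i, A i →* L) (φ : L →* H)
    -- the `φ_i` are compatible with the inclusions of the system:
    (hcompat : ∀ (i j : I) (h : i ≤ j) (a : A i), φi j ⟨a, hdir i j h a.2⟩ = φi i a)
    -- `φ` restricts to the inclusions `A_i ↪ H`:
    (hφ : ∀ (i : I) (a : A i), φ (φi i a) = (a : H))
    -- products of two letters lying in a common subgroup can be formed in `L`:
    (hprod : ∀ (i j k : I) (a : A i) (b : A j) (ha : (a : H) ∈ A k)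
      (hb : (b : H) ∈ A k), φi i a * φi j b = φi k ⟨(a : H) * b, mul_mem ha hb⟩)
    -- every element of `L` is a finite product of images `φ_i(a)`:
    (hgenL : ⨆ i, (φi i).range = (⊤ : Subgroup L))
    -- any word of length `> 1` mapping to `1` in `H` has two consecutive letters
    -- lying in a common group of the family:
    (hshort : ∀ (n : ℕ) (idx : Fin (n + 2) → I) (a : ∀ t, A (idx t)),
      (List.ofFn fun t => ((a t : H))).prod = 1 →
      ∃ (t : Fin (n + 1)) (k : I),
        ((a t.castSucc : H) ∈ A k) ∧ ((a t.succ : H) ∈ A k)) :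
    Function.Injective φ ∧ MonoidHom.range φ = ⨆ i, A i := by
  classical
  set Lp : List ((i : I) × A i) → L := fun w => (w.map fun p => φi p.1 p.2).prod with hLp
  set Hp : List ((i : I) × A i) → H := fun w => (w.map fun p => ((p.2 : H))).prod with hHp
  have hφprod : ∀ w, φ (Lp w) = Hp w := by
    intro w
    simp only [hLp, hHp, map_list_prod, List.map_map]
    congr 1
    apply List.map_congr_left
    intro p _
    exact hφ p.1 p.2
  -- merging two consecutive letters in a common subgroup
  have merge : ∀ (t : ℕ) (w : List ((i : I) × A i)) (ht : t + 1 < w.length) (k : I),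
      ((w.get ⟨t, by omega⟩).2 : H) ∈ A k → ((w.get ⟨t+1, ht⟩).2 : H) ∈ A k →
      ∃ w' : List ((i : I) × A i), w'.length + 1 = w.length ∧
        Lp w' = Lp w ∧ Hp w' = Hp w := by
    intro t
    induction t with
    | zero =>
      intro w ht k ha hb
      match w with
      | p :: q :: rest =>
        refine ⟨⟨k, ⟨(p.2 : H) * q.2, mul_mem ha hb⟩⟩ :: rest, by simp, ?_, ?_⟩
        · simp only [hLp, List.map_cons, List.prod_cons]
          rw [← hprod p.1 q.1 k p.2 q.2 ha hb, mul_assoc]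
        · simp only [hHp, List.map_cons, List.prod_cons, mul_assoc]
    | succ t ih =>
      intro w ht k ha hb
      match w with
      | p :: rest =>
        obtain ⟨w', h1, h2, h3⟩ := ih rest (by simpa using ht) k ha hb
        refine ⟨p :: w', by simpa using h1, ?_, ?_⟩
        · simp only [hLp, List.map_cons, List.prod_cons] at h2 ⊢; rw [h2]
        · simp only [hHp, List.map_cons, List.prod_cons] at h3 ⊢; rw [h3]
  -- key: words mapping to 1 in H have product 1 in L
  have key : ∀ (n : ℕ) (w : List ((i : I) × A i)), w.length ≤ n → Hp w = 1 → Lp w = 1 := by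
    intro n
    induction n with
    | zero =>
      intro w hlen _
      have : w = [] := List.length_eq_zero_iff.1 (Nat.le_zero.1 hlen)
      simp [this, hLp]
    | succ n IH =>
      intro w hlen hH1
      match w with
      | [] => simp [hLp]
      | [p] =>
        have h1 : (p.2 : H) = 1 := by simpa [hHp] using hH1
        have hp2 : p.2 = (1 : A p.1) := Subtype.ext h1
        simp [hLp, hp2]
      | p :: q :: rest =>
        set m := rest.length with hm
        have hofn : (List.ofFn fun t : Fin (m + 2) =>
            ((((p :: q :: rest).get t).2 : H))).prod = 1 := by
          have heq : (List.ofFn fun t : Fin (m + 2) => ((((p :: q :: rest).get t).2 : H)))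
              = (p :: q :: rest).map fun p => ((p.2 : H)) := by
            conv_rhs => rw [← List.ofFn_get (p :: q :: rest)]
            rw [List.map_ofFn]
            rfl
          rw [heq]
          exact hH1
        obtain ⟨t, k, ha, hb⟩ := hshort m (fun t => ((p :: q :: rest).get t).1)
          (fun t => ((p :: q :: rest).get t).2) hofn
        have htlt : (t : ℕ) + 1 < (p :: q :: rest).length := by
          simp only [List.length_cons]
          omega
        have ha' : (((p :: q :: rest).get ⟨(t : ℕ), by omega⟩).2 : H) ∈ A k := ha
        have hb' : (((p :: q :: rest).get ⟨(t : ℕ) + 1, htlt⟩).2 : H) ∈ A k := hb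
        obtain ⟨w', h1, h2, h3⟩ := merge (t : ℕ) (p :: q :: rest) htlt k ha' hb'
        rw [← h2]
        have hlen' : w'.length ≤ n := by
          simp only [List.length_cons] at h1 hlen
          omega
        exact IH w' hlen' (h3.trans hH1)
  -- every element of L is the product of a word
  have hrep : ∀ x : L, ∃ w, Lp w = x := by
    intro x
    let M : Subgroup L :=
      { carrier := {x | ∃ w, Lp w = x}
        one_mem' := ⟨[], by simp [hLp]⟩
        mul_mem' := by
          rintro a b ⟨wa, rfl⟩ ⟨wb, rfl⟩
          exact ⟨wa ++ wb, by simp [hLp]⟩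
        inv_mem' := by
          rintro a ⟨w, rfl⟩
          refine ⟨(w.map fun p => ⟨p.1, p.2⁻¹⟩).reverse, ?_⟩
          simp only [hLp, List.map_reverse, List.map_map, List.prod_inv_reverse, List.map_map]
          refine congrArg List.prod (congrArg List.reverse ?_)
          apply List.map_congr_left
          intro p _
          simp }
    have : x ∈ M := by
      have h : (⊤ : Subgroup L) ≤ M := by
        rw [← hgenL]
        apply iSup_le
        intro i
        rintro y ⟨a, rfl⟩
        exact ⟨[⟨i, a⟩], by simp [hLp]⟩
      exact h trivial
    exact this
  constructor
  · rw [injective_iff_map_eq_one]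
    intro x hx
    obtain ⟨w, rfl⟩ := hrep x
    have : Hp w = 1 := by rw [← hφprod w]; exact hx
    exact key w.length w le_rfl this
  · apply le_antisymm
    · rintro y ⟨x, rfl⟩
      obtain ⟨w, rfl⟩ := hrep x
      rw [hφprod]
      simp only [hHp]
      apply list_prod_mem
      intro c hc
      obtain ⟨p, _, rfl⟩ := List.mem_map.1 hc
      exact Subgroup.mem_iSup_of_mem p.1 p.2.2
    · apply iSup_le
      intro i a ha
      exact ⟨φi i ⟨a, ha⟩, hφ i ⟨a, ha⟩⟩
end

section
/- In a spherical Coxeter complex, a pair of roots (α, β) is prenilpotent if and only if α ≠ −β, and in that case [α,β] = {γ ∈ Φ : α ∩ β ⊆ γ}, i.e. the condition (−α)∩(−β) ⊆ −γ is automatic. -/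
/-!
STATEMENT 14: In a spherical (finite) Coxeter complex, a pair of roots `(α,β)` is
prenilpotent if and only if `α ≠ −β`, and in that case
`[α,β] = {γ ∈ Φ : α ∩ β ⊆ γ}`, i.e. the condition `(−α) ∩ (−β) ⊆ −γ` is
automatic.  Roots are modelled as half-spaces of reflections of `W` (or their
complements), with `−γ = γᶜ`.
-/

variable {B W : Type*} [Group W]

/-- The half-space of chambers on the positive side of the wall of a reflection `t`. -/
def halfSpace {M : CoxeterMatrix B} (cs : CoxeterSystem M W) (t : W) : Set W :=
  {w | cs.length w < cs.length (t * w)}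

/-- `α` is a root: a half-space of some reflection or its complement. -/
def IsRoot {M : CoxeterMatrix B} (cs : CoxeterSystem M W) (α : Set W) : Prop :=
  ∃ t : W, cs.IsReflection t ∧ (α = halfSpace cs t ∨ α = (halfSpace cs t)ᶜ)

/-- The root interval `[α,β] = {γ ∈ Φ : α ∩ β ⊆ γ ∧ (−α) ∩ (−β) ⊆ −γ}`. -/
def rootInterval {M : CoxeterMatrix B} (cs : CoxeterSystem M W) (α β : Set W) :
    Set (Set W) :=
  {γ | IsRoot cs γ ∧ α ∩ β ⊆ γ ∧ αᶜ ∩ βᶜ ⊆ γᶜ}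

namespace Statement14

open CoxeterSystem List
open scoped Classical

variable {M : CoxeterMatrix B} (cs : CoxeterSystem M W)

local prefix:100 "ℓ" => cs.length
local prefix:100 "σ" => cs.simple
local prefix:100 "π" => cs.wordProd

/-- The basic sign-flipping involution attached to a simple reflection. -/
noncomputable def mu (i : B) : Equiv.Perm (W × ℤˣ) where
  toFun p := (σ i * p.1 * σ i, if p.1 = σ i then -p.2 else p.2)
  invFun p := (σ i * p.1 * σ i, if p.1 = σ i then -p.2 else p.2)
  left_inv p := by
    obtain ⟨t, ε⟩ := p
    have h1 : σ i * (σ i * t * σ i) * σ i = t := by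
      simp [mul_assoc, cs.simple_mul_simple_cancel_left, cs.simple_mul_simple_self]
    have h2 : (σ i * t * σ i = σ i) ↔ (t = σ i) := by
      constructor
      · intro h
        have := congrArg (fun x => σ i * x * σ i) h
        simpa [h1, cs.simple_mul_simple_self, mul_assoc] using this
      · rintro rfl; simp [cs.simple_mul_simple_cancel_left]
    simp only [h1, h2]
    by_cases h : t = σ i <;> simp [h]
  right_inv p := by
    obtain ⟨t, ε⟩ := p
    have h1 : σ i * (σ i * t * σ i) * σ i = t := by
      simp [mul_assoc, cs.simple_mul_simple_cancel_left, cs.simple_mul_simple_self]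
    have h2 : (σ i * t * σ i = σ i) ↔ (t = σ i) := by
      constructor
      · intro h
        have := congrArg (fun x => σ i * x * σ i) h
        simpa [h1, cs.simple_mul_simple_self, mul_assoc] using this
      · rintro rfl; simp [cs.simple_mul_simple_cancel_left]
    simp only [h1, h2]
    by_cases h : t = σ i <;> simp [h]

theorem mu_apply (i : B) (t : W) (ε : ℤˣ) :
    mu cs i (t, ε) = (σ i * t * σ i, if t = σ i then -ε else ε) := rfl

/-- The sign factor at step `k` of the dihedral computation. -/
noncomputable def chi (i j : B) (k : ℕ) (t : W) : ℤˣ := if (σ i * σ j) ^ k * t = σ j then -1 else 1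

theorem sj_mul_q (i j : B) : σ j * (σ i * σ j) = (σ i * σ j)⁻¹ * σ j := by
  rw [mul_inv_rev, cs.inv_simple, cs.inv_simple]
  group

theorem chi_conj (i j : B) (k : ℕ) (t : W) :
    chi cs i j k ((σ i * σ j) * t * (σ i * σ j)⁻¹) = chi cs i j (k + 2) t := by
  have hiff : ((σ i * σ j) ^ k * ((σ i * σ j) * t * (σ i * σ j)⁻¹) = σ j) ↔
      ((σ i * σ j) ^ (k + 2) * t = σ j) := by
    constructor
    · intro h
      have h' : (σ i * σ j) ^ (k + 1) * t = σ j * (σ i * σ j) := by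
        rw [pow_succ]
        calc (σ i * σ j) ^ k * (σ i * σ j) * t
            = ((σ i * σ j) ^ k * ((σ i * σ j) * t * (σ i * σ j)⁻¹)) * (σ i * σ j) := by group
          _ = σ j * (σ i * σ j) := by rw [h]
      rw [sj_mul_q cs i j] at h'
      calc (σ i * σ j) ^ (k + 2) * t = (σ i * σ j) * ((σ i * σ j) ^ (k+1) * t) := by
            rw [← mul_assoc, ← pow_succ']
        _ = σ j := by rw [h', mul_inv_cancel_left]
    · intro h
      have h1 : (σ i * σ j) ^ (k + 1) * t = (σ i * σ j)⁻¹ * σ j := by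
        rw [eq_inv_mul_iff_mul_eq, ← mul_assoc, ← pow_succ']
        exact h
      rw [← sj_mul_q cs i j] at h1
      calc (σ i * σ j) ^ k * ((σ i * σ j) * t * (σ i * σ j)⁻¹)
          = ((σ i * σ j) ^ (k+1) * t) * (σ i * σ j)⁻¹ := by rw [pow_succ]; group
        _ = σ j := by rw [h1, mul_assoc, mul_inv_cancel, mul_one]
  simp only [chi, hiff]

theorem mu_mul_pow_apply (i j : B) (a : ℕ) (t : W) (ε : ℤˣ) :
    ((mu cs i * mu cs j) ^ a) (t, ε) =
      ((σ i * σ j) ^ a * t * ((σ i * σ j)⁻¹) ^ a,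
        (∏ k ∈ Finset.range a, (chi cs i j (2 * k) t * chi cs i j (2 * k + 1) t)) * ε) := by
  induction a generalizing t ε with
  | zero => simp
  | succ a ih =>
    rw [pow_succ, Equiv.Perm.mul_apply]
    have hmuij : (mu cs i * mu cs j) (t, ε) =
        ((σ i * σ j) * t * (σ i * σ j)⁻¹,
          (chi cs i j 0 t * chi cs i j 1 t) * ε) := by
      rw [Equiv.Perm.mul_apply, mu_apply, mu_apply]
      have e1 : σ i * (σ j * t * σ j) * σ i = (σ i * σ j) * t * (σ i * σ j)⁻¹ := by
        rw [mul_inv_rev, cs.inv_simple, cs.inv_simple]; group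
      have e0 : (t = σ j) ↔ ((σ i * σ j) ^ 0 * t = σ j) := by simp
      have e2 : (σ j * t * σ j = σ i) ↔ ((σ i * σ j) ^ 1 * t = σ j) := by
        rw [pow_one]
        constructor
        · intro h
          have : σ i * (σ j * t * σ j) * σ j = σ i * σ i * σ j := by rw [h]
          rw [cs.simple_mul_simple_self] at this
          calc σ i * σ j * t = σ i * (σ j * t * σ j) * σ j := by
                rw [mul_assoc, mul_assoc, mul_assoc, cs.simple_mul_simple_self]; group
            _ = σ j := by rw [this, one_mul]
        · intro h
          have : σ i * (σ i * σ j * t) = σ i * σ j := by rw [h]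
          rw [← mul_assoc, ← mul_assoc, cs.simple_mul_simple_self, one_mul] at this
          rw [this]
          rw [mul_assoc, cs.simple_mul_simple_self, mul_one]
      unfold chi
      rw [e0, e2, e1]
      by_cases h0 : (σ i * σ j) ^ 0 * t = σ j <;>
        by_cases h1 : (σ i * σ j) ^ 1 * t = σ j <;>
          simp [h0, h1]
    rw [hmuij, ih]
    simp only [Prod.mk.injEq]
    refine ⟨?_, ?_⟩
    · rw [pow_succ (σ i * σ j), pow_succ' ((σ i * σ j)⁻¹)]
      simp only [mul_assoc]
    · have key : ∀ k, chi cs i j k ((σ i * σ j) * t * (σ i * σ j)⁻¹) = chi cs i j (k + 2) t :=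
        fun k => chi_conj cs i j k t
      simp only [key]
      rw [Finset.prod_range_succ']
      have harith : ∀ k : ℕ, chi cs i j (2 * (k+1)) t * chi cs i j (2 * (k+1) + 1) t
          = chi cs i j (2 * k + 2) t * chi cs i j (2 * k + 1 + 2) t := by
        intro k
        have e1 : 2 * (k+1) = 2 * k + 2 := by omega
        have e2 : 2 * k + 2 + 1 = 2 * k + 1 + 2 := by omega
        rw [e1, e2]
      simp only [harith, Nat.mul_zero, Nat.zero_add]
      simp only [mul_assoc]

theorem prod_double {G : Type*} [CommMonoid G] (g : ℕ → G) (m : ℕ) :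
    ∏ k ∈ Finset.range m, (g (2 * k) * g (2 * k + 1)) = ∏ k ∈ Finset.range (2 * m), g k := by
  induction m with
  | zero => simp
  | succ m ih =>
    rw [Finset.prod_range_succ, ih, show 2 * (m + 1) = 2 * m + 1 + 1 by omega,
      Finset.prod_range_succ, Finset.prod_range_succ, mul_assoc]

theorem mu_liftable : M.IsLiftable (mu cs) := by
  intro i j
  have hq : (σ i * σ j) ^ M i j = 1 := cs.simple_mul_simple_pow i j
  apply Equiv.ext
  rintro ⟨t, ε⟩
  rw [mu_mul_pow_apply]
  have h1 : (σ i * σ j) ^ M i j * t * ((σ i * σ j)⁻¹) ^ (M i j) = t := by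
    rw [inv_pow, hq, inv_one, one_mul, mul_one]
  have h2 : (∏ k ∈ Finset.range (M i j), (chi cs i j (2 * k) t * chi cs i j (2 * k + 1) t)) = 1 := by
    rw [prod_double (fun n => chi cs i j n t)]
    have : 2 * M i j = M i j + M i j := by omega
    rw [this, Finset.prod_range_add]
    have hsame : ∀ k, chi cs i j (M i j + k) t = chi cs i j k t := by
      intro k
      unfold chi
      rw [pow_add, hq, one_mul]
    simp only [hsame]
    exact Int.units_mul_self _
  rw [h1, h2, one_mul]
  rfl

/-- The sign representation of `W` on `W × ℤˣ`. -/
noncomputable def rho : W →* Equiv.Perm (W × ℤˣ) := cs.lift ⟨mu cs, mu_liftable cs⟩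

theorem rho_simple (i : B) : rho cs (σ i) = mu cs i :=
  cs.lift_apply_simple (mu_liftable cs) i

theorem rho_wordProd (ω : List B) (t : W) (ε : ℤˣ) :
    rho cs (π ω) (t, ε) =
      (π ω * t * (π ω)⁻¹, ((-1 : ℤˣ) ^ (List.count t (cs.rightInvSeq ω))) * ε) := by
  induction ω generalizing t ε with
  | nil => simp [rho]
  | cons i ω ih =>
    rw [cs.wordProd_cons, map_mul, Equiv.Perm.mul_apply, ih, rho_simple, mu_apply]
    have hcount : List.count t (cs.rightInvSeq (i :: ω)) =
        List.count t (cs.rightInvSeq ω) + if (π ω)⁻¹ * σ i * π ω = t then 1 else 0 := by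
      show List.count t ((π ω)⁻¹ * σ i * π ω :: cs.rightInvSeq ω) = _
      rw [List.count_cons]
      simp
    have hcond : (π ω * t * (π ω)⁻¹ = σ i) ↔ ((π ω)⁻¹ * σ i * π ω = t) := by
      constructor
      · intro h; rw [← h]; group
      · intro h; rw [← h]; group
    simp only [Prod.mk.injEq]
    constructor
    · rw [mul_inv_rev, cs.inv_simple]
      group
    · rw [hcount]
      by_cases h : (π ω)⁻¹ * σ i * π ω = t
      · rw [if_pos (hcond.mpr h), if_pos h, pow_add, pow_one]
        simp only [mul_neg, mul_one, neg_mul]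
      · rw [if_neg (fun hc => h (hcond.mp hc)), if_neg h, Nat.add_zero]

/-- The sign of the pair `(w, t)`. -/
noncomputable def eta (w t : W) : ℤˣ := ((rho cs w) (t, 1)).2

theorem rho_apply (w t : W) (ε : ℤˣ) :
    rho cs w (t, ε) = (w * t * w⁻¹, eta cs w t * ε) := by
  obtain ⟨ω, rfl⟩ := cs.wordProd_surjective w
  rw [rho_wordProd]
  unfold eta
  rw [rho_wordProd, mul_one]

theorem eta_mul (x y t : W) : eta cs (x * y) t = eta cs x (y * t * y⁻¹) * eta cs y t := by
  have h := rho_apply cs (x * y) t 1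
  rw [map_mul, Equiv.Perm.mul_apply, rho_apply cs y t 1, mul_one,
    rho_apply cs x (y * t * y⁻¹) (eta cs y t)] at h
  have h2 := congrArg Prod.snd h.symm
  simpa using h2

theorem eta_wordProd (ω : List B) (t : W) :
    eta cs (π ω) t = (-1 : ℤˣ) ^ (List.count t (cs.rightInvSeq ω)) := by
  unfold eta
  rw [rho_wordProd, mul_one]

theorem eta_refl {t : W} (ht : cs.IsReflection t) : eta cs t t = -1 := by
  obtain ⟨w, i, rfl⟩ := ht
  have hwtw : w⁻¹ * (w * σ i * w⁻¹) * (w⁻¹)⁻¹ = σ i := by group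
  have h1 : rho cs w⁻¹ (w * σ i * w⁻¹, 1) = (σ i, eta cs w⁻¹ (w * σ i * w⁻¹)) := by
    rw [rho_apply, mul_one, hwtw]
  have h2 : rho cs w (σ i, eta cs w⁻¹ (w * σ i * w⁻¹)) = (w * σ i * w⁻¹, 1) := by
    rw [← h1, ← Equiv.Perm.mul_apply, ← map_mul, mul_inv_cancel, map_one,
      Equiv.Perm.one_apply]
  rw [rho_apply] at h2
  have hkey : eta cs w (σ i) * eta cs w⁻¹ (w * σ i * w⁻¹) = 1 := by
    have := congrArg Prod.snd h2
    simpa using this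
  have h3 : rho cs (w * σ i * w⁻¹) (w * σ i * w⁻¹, 1)
      = rho cs w (mu cs i (rho cs w⁻¹ (w * σ i * w⁻¹, 1))) := by
    rw [map_mul, map_mul, rho_simple, Equiv.Perm.mul_apply, Equiv.Perm.mul_apply]
  have hfin : eta cs w (σ i) * -(eta cs w⁻¹ (w * σ i * w⁻¹)) = -1 := by
    rw [mul_neg, hkey]
  unfold eta
  rw [h3, h1, mu_apply, if_pos rfl, rho_apply]
  simpa using hfin

theorem eta_neg_iff {t : W} (ht : cs.IsReflection t) (w : W) :
    ℓ (w * t) < ℓ w ↔ eta cs w t = -1 := by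
  have hmem : ∀ v : W, eta cs v t = -1 → ℓ (v * t) < ℓ v := by
    intro v hv
    obtain ⟨ω, hlen, hprod⟩ := cs.exists_reduced_word v
    have hred : cs.IsReduced ω := hlen
    rw [hprod, eta_wordProd] at hv
    have hodd : Odd (List.count t (cs.rightInvSeq ω)) := by
      by_contra hc
      rw [Nat.not_odd_iff_even] at hc
      rw [hc.neg_one_pow] at hv
      exact absurd hv (by decide)
    have hpos : 0 < List.count t (cs.rightInvSeq ω) := hodd.pos
    have hmem' : t ∈ cs.rightInvSeq ω := List.count_pos_iff.mp hpos
    have := cs.isRightInversion_of_mem_rightInvSeq hred hmem'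
    rw [hprod]
    exact this.2
  constructor
  · intro hlt
    have hw : w = (w * t) * t := by rw [mul_assoc, ht.mul_self, mul_one]
    have hconj : t * t * t⁻¹ = t := by rw [ht.mul_self, one_mul, ht.inv]
    have hv1 : eta cs (w * t) t = 1 := by
      rcases Int.units_eq_one_or (eta cs (w * t) t) with h | h
      · exact h
      · exfalso
        have := hmem (w * t) h
        rw [mul_assoc, ht.mul_self, mul_one] at this
        omega
    calc eta cs w t = eta cs ((w * t) * t) t := by rw [← hw]
      _ = eta cs (w * t) (t * t * t⁻¹) * eta cs t t := eta_mul cs (w * t) t t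
      _ = -1 := by rw [hconj, hv1, eta_refl cs ht, one_mul]
  · exact hmem w

theorem mem_halfSpace_iff_eta {t : W} (ht : cs.IsReflection t) (x : W) :
    x ∈ halfSpace cs t ↔ eta cs x⁻¹ t = 1 := by
  have h1 : ℓ (t * x) = ℓ (x⁻¹ * t) := by
    rw [← cs.length_inv (t * x), mul_inv_rev, ht.inv]
  have h2 : ℓ x = ℓ x⁻¹ := (cs.length_inv x).symm
  have hne : ℓ (x⁻¹ * t) ≠ ℓ x⁻¹ := ht.length_mul_left_ne x⁻¹
  constructor
  · intro hx
    rcases Int.units_eq_one_or (eta cs x⁻¹ t) with h | h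
    · exact h
    · exfalso
      have := (eta_neg_iff cs ht x⁻¹).mpr h
      have hx' : ℓ x < ℓ (t * x) := hx
      omega
  · intro he
    show ℓ x < ℓ (t * x)
    have : ¬ (ℓ (x⁻¹ * t) < ℓ x⁻¹) := by
      intro hc
      rw [(eta_neg_iff cs ht x⁻¹).mp hc] at he
      exact absurd he (by decide)
    omega

theorem exists_flip [Finite W] :
    ∃ e : Equiv.Perm W, ∀ t : W, cs.IsReflection t →
      ∀ w : W, e w ∈ halfSpace cs t ↔ w ∉ halfSpace cs t := by
  obtain ⟨w₀, hw₀⟩ := Finite.exists_max (cs.length)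
  have hneg : ∀ t : W, cs.IsReflection t → eta cs w₀ t = -1 := by
    intro t ht
    exact (eta_neg_iff cs ht w₀).mp (lt_of_le_of_ne (hw₀ _) (ht.length_mul_left_ne w₀))
  refine ⟨Equiv.mulRight w₀⁻¹, fun t ht w => ?_⟩
  have hinv : ((Equiv.mulRight w₀⁻¹) w)⁻¹ = w₀ * w⁻¹ := by
    simp [Equiv.mulRight, mul_inv_rev]
  rw [mem_halfSpace_iff_eta cs ht, mem_halfSpace_iff_eta cs ht, hinv]
  have hco : eta cs (w₀ * w⁻¹) t = eta cs w₀ (w⁻¹ * t * (w⁻¹)⁻¹) * eta cs w⁻¹ t :=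
    eta_mul cs w₀ w⁻¹ t
  rw [hco, hneg _ (ht.conj w⁻¹)]
  rcases Int.units_eq_one_or (eta cs w⁻¹ t) with h | h <;> simp [h]

theorem flip_image [Finite W] {e : Equiv.Perm W}
    (he : ∀ t : W, cs.IsReflection t → ∀ w : W, e w ∈ halfSpace cs t ↔ w ∉ halfSpace cs t)
    {α : Set W} (hα : IsRoot cs α) : e '' α = αᶜ := by
  obtain ⟨t, ht, hcase⟩ := hα
  have hmem : ∀ w : W, e w ∈ α ↔ w ∉ α := by
    intro w
    rcases hcase with rfl | rfl
    · exact he t ht w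
    · rw [Set.mem_compl_iff, Set.mem_compl_iff, he t ht w, not_not]
  ext x
  constructor
  · rintro ⟨a, ha, rfl⟩
    exact fun hc => (hmem a).mp hc ha
  · intro hx
    refine ⟨e.symm x, ?_, e.apply_symm_apply x⟩
    by_contra hc
    have := (hmem (e.symm x)).mpr hc
    rw [e.apply_symm_apply] at this
    exact hx this

end Statement14


theorem spherical_prenilpotent_iff {M : CoxeterMatrix B} (cs : CoxeterSystem M W)
    [Finite W] (α β : Set W) (hα : IsRoot cs α) (hβ : IsRoot cs β) :
    (((α ∩ β).Nonempty ∧ (αᶜ ∩ βᶜ).Nonempty) ↔ α ≠ βᶜ) ∧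
      (α ≠ βᶜ → rootInterval cs α β = {γ | IsRoot cs γ ∧ α ∩ β ⊆ γ}) := by
  obtain ⟨e, he⟩ := Statement14.exists_flip cs
  have him : ∀ δ : Set W, IsRoot cs δ → e '' δ = δᶜ :=
    fun δ hδ => Statement14.flip_image cs he hδ
  have hcard : ∀ δ : Set W, IsRoot cs δ → δ.ncard = δᶜ.ncard := by
    intro δ hδ
    rw [← him δ hδ, Set.ncard_image_of_injective _ e.injective]
  have hhalf : ∀ δ : Set W, IsRoot cs δ → 2 * δ.ncard = Nat.card W := by
    intro δ hδ
    have h1 := Set.ncard_add_ncard_compl δ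
    rw [← hcard δ hδ] at h1
    omega
  have hαβc : α.ncard = (βᶜ).ncard := by
    have h1 := hhalf α hα
    have h2 := hhalf β hβ
    have h3 := Set.ncard_add_ncard_compl β
    omega
  constructor
  · constructor
    · rintro ⟨h1, h2⟩ heq
      rw [heq] at h1
      obtain ⟨x, hx⟩ := h1
      exact hx.1 hx.2
    · intro hne
      constructor
      · by_contra hemp
        rw [Set.not_nonempty_iff_eq_empty] at hemp
        have hsub : α ⊆ βᶜ := by
          intro x hx hxb
          exact absurd (Set.mem_inter hx hxb) (by rw [hemp]; exact Set.notMem_empty x)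
        exact hne (Set.eq_of_subset_of_ncard_le hsub (le_of_eq hαβc.symm) (Set.toFinite _))
      · by_contra hemp
        rw [Set.not_nonempty_iff_eq_empty] at hemp
        have hsub : αᶜ ⊆ β := by
          intro x hx
          by_contra hxb
          exact absurd (Set.mem_inter hx hxb) (by rw [hemp]; exact Set.notMem_empty x)
        have hcc : αᶜ.ncard = β.ncard := by
          have h1 := hcard α hα
          have h2 := hhalf β hβ
          have h3 := Set.ncard_add_ncard_compl β
          have h4 := hαβc
          omega
        have : αᶜ = β := Set.eq_of_subset_of_ncard_le hsub (le_of_eq hcc.symm) (Set.toFinite _)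
        rw [← this, compl_compl] at hne
        exact hne rfl
  · intro _
    ext γ
    simp only [rootInterval, Set.mem_setOf_eq]
    constructor
    · rintro ⟨h1, h2, _⟩
      exact ⟨h1, h2⟩
    · rintro ⟨h1, h2⟩
      refine ⟨h1, h2, ?_⟩
      rw [← him α hα, ← him β hβ, ← Set.image_inter e.injective, ← him γ h1]
      exact Set.image_mono h2
end

section
/- If a group G acts on a set X and H ≤ G is a subgroup containing the stabilizer of a point x_0, and the orbit map induces a bijection between the G-orbit of x_0 and G/H whenever the stabilizer equals H, then: for the Wagoner complex setting where G acts on the components of |W(G)| with the component of the standard apartment having stabilizer exactly G† = ⟨U_s : s ∈ Σ⟩ and the action on components being transitive, the set of connected components of |W(G)| is in G-equivariant bijection with G/G†. -/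
/-!
STATEMENT 17: If a group `G` acts on a set `X` (the set of connected components
of `|W(G)|`), the action is transitive, and the stabilizer of the base point
(the component of the standard apartment) is exactly `G† = ⟨U_s : s ∈ Σ⟩`, then
`X` is in `G`-equivariant bijection with the coset space `G/G†`.
-/

theorem components_equiv_coset_space {G : Type*} [Group G] {X : Type*}
    [MulAction G X] (Gdag : Subgroup G) (x₀ : X)
    -- the action on components is transitive:
    (htrans : ∀ x : X, ∃ g : G, g • x₀ = x)
    -- the stabilizer of the component of the standard apartment is `G†`:
    (hstab : MulAction.stabilizer G x₀ = Gdag) :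
    ∃ e : G ⧸ Gdag ≃ X, e ((1 : G) : G ⧸ Gdag) = x₀ ∧
      ∀ (g : G) (y : G ⧸ Gdag), e (g • y) = g • e y := by
  subst hstab
  have hwd : ∀ (a b : G),
      @Setoid.r _ (QuotientGroup.leftRel (MulAction.stabilizer G x₀)) a b →
        a • x₀ = b • x₀ := by
    intro a b hab
    have h : a⁻¹ * b ∈ MulAction.stabilizer G x₀ := by
      rwa [QuotientGroup.leftRel_apply] at hab
    rw [MulAction.mem_stabilizer_iff] at h
    calc a • x₀ = a • (a⁻¹ * b) • x₀ := by rw [h]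
      _ = b • x₀ := by rw [smul_smul, mul_inv_cancel_left]
  refine ⟨Equiv.ofBijective (fun y => Quotient.liftOn' y (fun g => g • x₀) hwd)
    ⟨?_, ?_⟩, ?_, ?_⟩
  · intro a b hab
    induction a using Quotient.inductionOn'
    induction b using Quotient.inductionOn'
    rename_i a b
    simp only [Quotient.liftOn'_mk''] at hab
    refine Quotient.sound' ?_
    rw [QuotientGroup.leftRel_apply]
    rw [MulAction.mem_stabilizer_iff, mul_smul, ← hab, inv_smul_smul]
  · intro x
    obtain ⟨g, hg⟩ := htrans x
    exact ⟨Quotient.mk'' g, hg⟩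
  · exact one_smul G x₀
  · intro g y
    induction y using Quotient.inductionOn'
    rename_i a
    exact mul_smul g a x₀
end
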